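/- Let m ≥ 1, r ≥ 1 and n ∈ ℕ. Then, as an identity of rational numbers, ∑_{n₁+⋯+n_r = n} C^m_{n₁} ⋯ C^m_{n_r} = (r/(r+nm)) · binom(r+nm, n), where the sum runs over all r-tuples (n₁,…,n_r) of nonnegative integers with n₁+⋯+n_r = n and binom denotes the usual binomial coefficient of natural numbers. -/

import Mathlib

open Finset

/-- The `n`-th `m`-ary Catalan number `C^m_n = binom(nm, n) / (n(m−1)+1)`, as a rational
number. -/
def mCatalan (m n : ℕ) : ℚ :=
  (Nat.choose (n * m) n : ℚ) / ((n : ℚ) * ((m : ℚ) - 1) + 1)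

/-- Raney numbers `(r/(r+nm)) binom(r+nm, n)`. -/
noncomputable def Fr (m r n : ℕ) : ℚ :=
  (r : ℚ) / ((r : ℚ) + (n : ℚ) * (m : ℚ)) * (Nat.choose (r + n * m) n : ℚ)

lemma Fr_zero (m n : ℕ) : Fr m 0 n = 0 := by simp [Fr]

lemma Fr_n_zero (m r : ℕ) (hr : 1 ≤ r) : Fr m r 0 = 1 := by
  have : (r : ℚ) ≠ 0 := by positivity
  simp [Fr, this]

/-- Key recurrence: `F (r+1) (n+1) = F r (n+1) + F (r+m) n`. -/
lemma Fr_rec (m r n : ℕ) (hm : 1 ≤ m) :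
    Fr m (r + 1) (n + 1) = Fr m r (n + 1) + Fr m (r + m) n := by
  obtain ⟨K, hK⟩ : ∃ K, K = r + (n + 1) * m := ⟨_, rfl⟩
  unfold Fr
  rw [show r + 1 + (n + 1) * m = K + 1 by rw [hK]; ring,
    show r + (n + 1) * m = K from hK.symm,
    show r + m + n * m = K by rw [hK]; ring]
  have hKpos : 0 < K := by
    have : 0 < (n + 1) * m := Nat.mul_pos n.succ_pos hm
    omega
  have hKQ : (K : ℚ) = r + ((n : ℚ) + 1) * m := by rw [hK]; push_cast; ring
  have hKne : (K : ℚ) ≠ 0 := by positivity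
  have hK1ne : (K : ℚ) + 1 ≠ 0 := by positivity
  have hAQ : ((Nat.choose (K + 1) (n + 1) : ℚ)) =
      (Nat.choose K n : ℚ) + (Nat.choose K (n + 1) : ℚ) := by
    exact_mod_cast congrArg (Nat.cast : ℕ → ℚ) (Nat.choose_succ_succ' K n)
  have hBQ : ((K : ℚ) + 1) * (Nat.choose K n : ℚ) =
      (Nat.choose (K + 1) (n + 1) : ℚ) * ((n : ℚ) + 1) := by
    exact_mod_cast congrArg (Nat.cast : ℕ → ℚ) (Nat.add_one_mul_choose_eq K n)
  push_cast
  rw [show (r : ℚ) + 1 + ((n : ℚ) + 1) * m = (K : ℚ) + 1 by rw [hKQ]; ring,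
    show (r : ℚ) + ((n : ℚ) + 1) * m = (K : ℚ) from hKQ.symm,
    show (r : ℚ) + (m : ℚ) + (n : ℚ) * m = (K : ℚ) by rw [hKQ]; ring]
  have hd : (Nat.choose K (n + 1) : ℚ) = (Nat.choose (K + 1) (n + 1) : ℚ)
      - (Nat.choose K n : ℚ) := by linarith
  rw [hd]
  field_simp
  linear_combination ((Nat.choose (K + 1) (n + 1) : ℚ)) * hKQ - (m : ℚ) * hBQ

/-- Convolution: `F (r+1) ⋆ F 1 = F (r+2)`. -/
lemma Fr_conv (m : ℕ) (hm : 1 ≤ m) :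
    ∀ n r, ∑ k ∈ range (n + 1), Fr m (r + 1) k * Fr m 1 (n - k) = Fr m (r + 2) n := by
  intro n
  induction n using Nat.strong_induction_on with
  | _ n ih =>
    match n with
    | 0 =>
      intro r
      simp [Fr_n_zero]
    | (n + 1) =>
      intro r
      induction r with
      | zero =>
        rw [Finset.sum_range_succ']
        simp only [Nat.zero_add, Nat.sub_zero]
        have h1 : ∀ j ∈ range (n + 1),
            Fr m 1 (j + 1) * Fr m 1 (n + 1 - (j + 1))
              = Fr m (m - 1 + 1) j * Fr m 1 (n - j) := by
          intro j _
          have h := Fr_rec m 0 j hm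
          rw [Nat.zero_add, Fr_zero, zero_add, Nat.zero_add] at h
          rw [Nat.succ_sub_succ, h, show m - 1 + 1 = m by omega]
        rw [Finset.sum_congr rfl h1, ih n (by omega) (m - 1),
          show m - 1 + 2 = 1 + m by omega, Fr_n_zero m 1 le_rfl, one_mul]
        have h := Fr_rec m 1 n hm
        norm_num at h ⊢
        linarith
      | succ r ihr =>
        rw [Finset.sum_range_succ'] at ihr ⊢
        simp only [Nat.succ_sub_succ, Nat.sub_zero] at ihr ⊢
        have h1 : ∀ j ∈ range (n + 1),
            Fr m (r + 1 + 1) (j + 1) * Fr m 1 (n - j)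
              = Fr m (r + 1) (j + 1) * Fr m 1 (n - j)
                + Fr m (r + 1 + m) j * Fr m 1 (n - j) := by
          intro j _
          rw [Fr_rec m (r + 1) j hm, add_mul]
        rw [Finset.sum_congr rfl h1, Finset.sum_add_distrib]
        have h2 : ∑ j ∈ range (n + 1), Fr m (r + 1 + m) j * Fr m 1 (n - j)
            = Fr m (r + 1 + m + 1) n := by
          have h := ih n (by omega) (r + m)
          rw [show r + m + 1 = r + 1 + m by omega, show r + m + 2 = r + 1 + m + 1 by omega] at h
          exact h
        rw [h2, Fr_n_zero m (r + 1 + 1) (by omega), one_mul,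
          show r + 1 + 2 = r + 2 + 1 by omega, Fr_rec m (r + 2) n hm,
          show r + 2 + m = r + 1 + m + 1 by omega]
        rw [Fr_n_zero m (r + 1) (by omega), one_mul] at ihr
        linarith

lemma sum_antidiagonalTuple_succ {M : Type*} [AddCommMonoid M] (r n : ℕ)
    (g : (Fin (r + 1) → ℕ) → M) :
    ∑ f ∈ Finset.Nat.antidiagonalTuple (r + 1) n, g f
      = ∑ p ∈ Finset.HasAntidiagonal.antidiagonal n,
          ∑ f ∈ Finset.Nat.antidiagonalTuple r p.2, g (Fin.cons p.1 f) := by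
  have main : ∑ f ∈ Finset.Nat.antidiagonalTuple (r + 1) n, g f
      = ∑ x ∈ (Finset.HasAntidiagonal.antidiagonal n).sigma (fun p => Finset.Nat.antidiagonalTuple r p.2),
          g (Fin.cons x.1.1 x.2) := by
    refine Finset.sum_nbij' (fun f => ⟨(f 0, n - f 0), Fin.tail f⟩)
      (fun x => Fin.cons x.1.1 x.2) ?_ ?_ ?_ ?_ ?_
    · intro f hf
      rw [Finset.Nat.mem_antidiagonalTuple, Fin.sum_univ_succ] at hf
      simp only [Finset.mem_sigma, Finset.HasAntidiagonal.mem_antidiagonal,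
        Finset.Nat.mem_antidiagonalTuple]
      refine ⟨by omega, ?_⟩
      simp only [Fin.tail]
      omega
    · intro x hx
      rw [Finset.mem_sigma, Finset.HasAntidiagonal.mem_antidiagonal,
        Finset.Nat.mem_antidiagonalTuple] at hx
      rw [Finset.Nat.mem_antidiagonalTuple, Fin.sum_cons, hx.2, hx.1]
    · intro f hf
      exact Fin.cons_self_tail f
    · intro x hx
      rw [Finset.mem_sigma, Finset.HasAntidiagonal.mem_antidiagonal,
        Finset.Nat.mem_antidiagonalTuple] at hx
      obtain ⟨⟨a, b⟩, t⟩ := x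
      simp only at hx
      have hb : n - a = b := by omega
      simp only [Fin.cons_zero, Fin.tail_cons, hb]
    · intro f hf
      rw [Fin.cons_self_tail]
  rw [main, Finset.sum_sigma]

lemma mCatalan_eq_Fr (m n : ℕ) (hm : 1 ≤ m) : mCatalan m n = Fr m 1 n := by
  unfold mCatalan Fr
  rw [show 1 + n * m = n * m + 1 from Nat.add_comm 1 (n * m)]
  have hle : n ≤ n * m := Nat.le_mul_of_pos_right n hm
  have h := congrArg (Nat.cast : ℕ → ℚ) (Nat.choose_mul_succ_eq (n * m) n)
  push_cast [Nat.cast_sub (by omega : n ≤ n * m + 1)] at h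
  have hd1 : (n : ℚ) * ((m : ℚ) - 1) + 1 ≠ 0 := by
    have : ((n * m + 1 - n : ℕ) : ℚ) = (n : ℚ) * ((m : ℚ) - 1) + 1 := by
      push_cast [Nat.cast_sub (by omega : n ≤ n * m + 1)]; ring
    rw [← this]
    have : 0 < n * m + 1 - n := by omega
    positivity
  have hd2 : (1 : ℚ) + (n : ℚ) * (m : ℚ) ≠ 0 := by positivity
  field_simp
  linear_combination h

/-- For `m ≥ 1`, `r ≥ 1` and `n ∈ ℕ`,
`∑_{n₁+⋯+n_r = n} C^m_{n₁} ⋯ C^m_{n_r} = (r/(r+nm)) · binom(r+nm, n)` in `ℚ`,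
the sum running over all `r`-tuples of nonnegative integers summing to `n`. -/
theorem mCatalan_multi_convolution (m r n : ℕ) (hm : 1 ≤ m) (hr : 1 ≤ r) :
    ∑ f ∈ Finset.Nat.antidiagonalTuple r n, ∏ i, mCatalan m (f i)
      = (r : ℚ) / ((r : ℚ) + (n : ℚ) * (m : ℚ)) * (Nat.choose (r + n * m) n : ℚ) := by
  have key : ∀ r, 1 ≤ r → ∀ n,
      ∑ f ∈ Finset.Nat.antidiagonalTuple r n, ∏ i, mCatalan m (f i) = Fr m r n := by
    intro r hr
    induction r, hr using Nat.le_induction with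
    | base =>
      intro n
      rw [Finset.Nat.antidiagonalTuple_one, Finset.sum_singleton]
      simp only [Fin.prod_univ_one, Matrix.cons_val_zero]
      exact mCatalan_eq_Fr m n hm
    | succ r hr ihr =>
      intro n
      rw [sum_antidiagonalTuple_succ]
      have h1 : ∀ p ∈ Finset.HasAntidiagonal.antidiagonal n,
          ∑ f ∈ Finset.Nat.antidiagonalTuple r p.2,
              (∏ i : Fin (r + 1), mCatalan m ((Fin.cons p.1 f : Fin (r + 1) → ℕ) i))
            = Fr m 1 p.1 * Fr m r p.2 := by
        intro p _
        have : ∀ f : Fin r → ℕ, (∏ i : Fin (r + 1), mCatalan m ((Fin.cons p.1 f : Fin (r + 1) → ℕ) i))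
            = mCatalan m p.1 * ∏ i : Fin r, mCatalan m (f i) := by
          intro f
          simp [Fin.prod_univ_succ]
        simp_rw [this]
        rw [← Finset.mul_sum, ihr p.2, mCatalan_eq_Fr m p.1 hm]
      rw [Finset.sum_congr rfl h1, Finset.Nat.sum_antidiagonal_eq_sum_range_succ_mk]
      have h2 : ∀ k ∈ range (n + 1), Fr m 1 k * Fr m r (n - k)
          = (fun j => Fr m r j * Fr m 1 (n - j)) (n - k) := by
        intro k hk
        rw [Finset.mem_range] at hk
        simp only []
        rw [show n - (n - k) = k by omega, mul_comm]
      rw [Finset.sum_congr rfl h2]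
      rw [show ∑ k ∈ range (n + 1), (fun j => Fr m r j * Fr m 1 (n - j)) (n - k)
          = ∑ k ∈ range (n + 1), Fr m r k * Fr m 1 (n - k) by
        rw [← Finset.sum_range_reflect]
        refine Finset.sum_congr rfl fun k hk => ?_
        rw [Finset.mem_range] at hk
        rw [show n + 1 - 1 - k = n - k by omega, show n - (n - k) = k by omega]]
      obtain ⟨s, rfl⟩ : ∃ s, r = s + 1 := ⟨r - 1, by omega⟩
      rw [Fr_conv m hm n s, show s + 2 = s + 1 + 1 by omega]
  have h := key r hr n
  rw [h]
  rfl
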